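/- Let n ≥ 1 and for i = 1,…,n let f_i : ℝ^{d₁} → ℝ be continuous, C_f-Lipschitz and ρ_f-weakly convex with ρ_f > 0, and let g_i : ℝ^d → ℝ^{d₁} be C_g-Lipschitz and L_g-smooth. Let ε > 0 and λ = ε/C_f, and assume λ < 1/ρ_f. If w ∈ ℝ^d satisfies ‖∇F_λ(w)‖ ≤ ε, then there exist points t_1,…,t_n ∈ ℝ^{d₁} and vectors y_1,…,y_n, where each y_i is a subgradient of f_i at t_i (with modulus ρ_f), such that ‖t_i − g_i(w)‖ ≤ ε for every i and ‖(1/n)∑_{i=1}^n (Dg_i(w))^* y_i‖ ≤ ε. -/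

import Mathlib

open scoped RealInnerProductSpace BigOperators

section Aux
variable {E : Type*} [NormedAddCommGroup E] [InnerProductSpace ℝ E]

theorem my_prox_exists [FiniteDimensional ℝ E] (f : E → ℝ) (hc : Continuous f)
    (Cf lam : ℝ) (hCf : 0 < Cf) (hlam : 0 < lam)
    (hlip : ∀ x y, |f x - f y| ≤ Cf * ‖x - y‖) (u : E) :
    ∃ t, ∀ v, f t + ‖u - t‖ ^ 2 / (2 * lam) ≤ f v + ‖u - v‖ ^ 2 / (2 * lam) := by
  set R := 2 * lam * Cf with hR
  have hR0 : 0 < R := by positivity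
  have hcont : Continuous fun v : E => f v + ‖u - v‖ ^ 2 / (2 * lam) :=
    hc.add ((((continuous_const.sub continuous_id).norm.pow 2).div_const _))
  obtain ⟨t, htmem, htmin'⟩ := (isCompact_closedBall u R).exists_isMinOn
    ⟨u, Metric.mem_closedBall_self hR0.le⟩ hcont.continuousOn
  have htmin : ∀ v ∈ Metric.closedBall u R,
      f t + ‖u - t‖ ^ 2 / (2 * lam) ≤ f v + ‖u - v‖ ^ 2 / (2 * lam) := fun v hv => htmin' hv
  refine ⟨t, fun v => ?_⟩
  by_cases hv : v ∈ Metric.closedBall u R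
  · exact htmin v hv
  · have hd : R < ‖u - v‖ := by
      rw [Metric.mem_closedBall, dist_comm, dist_eq_norm] at hv
      push_neg at hv
      exact hv
    have h1 : f t + ‖u - t‖ ^ 2 / (2 * lam) ≤ f u := by
      have := htmin u (Metric.mem_closedBall_self hR0.le)
      simpa using this
    have h2 : f u - f v ≤ Cf * ‖u - v‖ := (abs_le.1 (hlip u v)).2
    have h3 : Cf * ‖u - v‖ ≤ ‖u - v‖ ^ 2 / (2 * lam) := by
      rw [le_div_iff₀ (by positivity)]
      nlinarith [hd, hR0]
    linarith

variable {E : Type*} [NormedAddCommGroup E] [InnerProductSpace ℝ E]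

set_option maxHeartbeats 1000000 in
theorem my_prox_subgrad (f : E → ℝ) (ρ lam : ℝ) (hρ : 0 < ρ) (hlam : 0 < lam)
    (hlρ : lam * ρ ≤ 1)
    (hwc : ConvexOn ℝ Set.univ fun x => f x + ρ / 2 * ‖x‖ ^ 2) (u t : E)
    (hmin : ∀ v, f t + ‖u - t‖ ^ 2 / (2 * lam) ≤ f v + ‖u - v‖ ^ 2 / (2 * lam)) :
    ∀ z, f z ≥ f t + ⟪lam⁻¹ • (u - t), z - t⟫ - ρ / 2 * ‖z - t‖ ^ 2 := by
  intro z
  have hlamne : lam ≠ 0 := ne_of_gt hlam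
  set p := z - t with hp
  set P := ‖p‖ ^ 2 with hPdef
  set B1 := ⟪u - t, p⟫ with hB1
  clear_value p P B1
  have hinner : ⟪lam⁻¹ • (u - t), p⟫ = lam⁻¹ * B1 := by
    rw [real_inner_smul_left, hB1]
  rw [hinner]
  have hP0 : 0 ≤ P := by rw [hPdef]; positivity
  set B := P * (1 / (2 * lam) - ρ / 2) with hBdef
  have hB : 0 ≤ B := by
    have h1 : ρ / 2 ≤ 1 / (2 * lam) := by
      rw [div_le_div_iff₀ (by norm_num) (by positivity)]
      nlinarith
    rw [hBdef]; nlinarith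
  have key : ∀ s : ℝ, 0 < s → s ≤ 1 →
      f t + lam⁻¹ * B1 - ρ / 2 * P ≤ f z + s * B := by
    intro s hs hs1
    set vs := t + s • p with hvs
    clear_value vs
    have hmin' := hmin vs
    have hconv := hwc.2 (Set.mem_univ t) (Set.mem_univ z) (by linarith : (0:ℝ) ≤ 1 - s)
      hs.le (by ring)
    simp only [smul_eq_mul] at hconv
    have hvseq : (1 - s) • t + s • z = vs := by
      rw [hvs, hp]; module
    rw [hvseq] at hconv
    have hz : z = t + p := by rw [hp]; abel
    have hnz : ‖z‖ ^ 2 = ‖t‖ ^ 2 + 2 * ⟪t, p⟫ + P := by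
      rw [hz, norm_add_sq_real, hPdef]
    have hnvs : ‖vs‖ ^ 2 = ‖t‖ ^ 2 + 2 * s * ⟪t, p⟫ + s ^ 2 * P := by
      rw [hvs, norm_add_sq_real, real_inner_smul_right, norm_smul, hPdef]
      simp only [Real.norm_eq_abs, abs_of_pos hs, mul_pow]
      ring
    have huvs : ‖u - vs‖ ^ 2 = ‖u - t‖ ^ 2 - 2 * s * B1 + s ^ 2 * P := by
      have h : u - vs = (u - t) - s • p := by rw [hvs]; abel
      rw [h, norm_sub_sq_real, real_inner_smul_right, norm_smul, hB1, hPdef]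
      simp only [Real.norm_eq_abs, abs_of_pos hs, mul_pow]
      ring
    rw [hnz, hnvs] at hconv
    rw [huvs] at hmin'
    -- clear denominators in hmin'
    have hmin2 : f t * (2 * lam) + ‖u - t‖ ^ 2 ≤
        f vs * (2 * lam) + (‖u - t‖ ^ 2 - 2 * s * B1 + s ^ 2 * P) := by
      have h := mul_le_mul_of_nonneg_right hmin' (by positivity : (0:ℝ) ≤ 2 * lam)
      have e1 : ‖u - t‖ ^ 2 / (2 * lam) * (2 * lam) = ‖u - t‖ ^ 2 :=
        div_mul_cancel₀ _ (by positivity)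
      have e2 : (‖u - t‖ ^ 2 - 2 * s * B1 + s ^ 2 * P) / (2 * lam) * (2 * lam)
          = ‖u - t‖ ^ 2 - 2 * s * B1 + s ^ 2 * P := div_mul_cancel₀ _ (by positivity)
      nlinarith [h, e1, e2]
    have hconv3 : f vs * (2 * lam) ≤
        ((1 - s) * (f t + ρ / 2 * ‖t‖ ^ 2) + s * (f z + ρ / 2 * (‖t‖ ^ 2 + 2 * ⟪t, p⟫ + P))
          - ρ / 2 * (‖t‖ ^ 2 + 2 * s * ⟪t, p⟫ + s ^ 2 * P)) * (2 * lam) :=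
      mul_le_mul_of_nonneg_right (by linarith) (by positivity)
    have main : 2 * lam * s * f t + 2 * s * B1 - lam * ρ * s * P ≤
        2 * lam * s * f z + s ^ 2 * P * (1 - lam * ρ) := by nlinarith [hmin2, hconv3]
    -- divide by 2*lam*s
    rw [hBdef]
    rw [← mul_le_mul_iff_of_pos_right (show (0:ℝ) < 2 * lam * s by positivity)]
    have e3 : (f z + s * (P * (1 / (2 * lam) - ρ / 2))) * (2 * lam * s)
        = 2 * lam * s * f z + s ^ 2 * P * (1 - lam * ρ) - s^2 * P * (lam * ρ) * 0 := by
      field_simp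
      ring
    have e4 : (f t + lam⁻¹ * B1 - ρ / 2 * P) * (2 * lam * s)
        = 2 * lam * s * f t + 2 * s * B1 - lam * ρ * s * P := by
      field_simp
    rw [e3, e4]
    linarith [main]
  refine le_of_forall_pos_le_add fun ε hε => ?_
  rcases le_or_gt B 0 with hB0 | hB0
  · have := key 1 one_pos le_rfl
    nlinarith
  · set s := min 1 (ε / B) with hsdef
    have hs0 : 0 < s := lt_min one_pos (by positivity)
    have hks := key s hs0 (min_le_left _ _)
    have hsB : s * B ≤ ε := by
      calc s * B ≤ (ε / B) * B :=
            mul_le_mul_of_nonneg_right (min_le_right _ _) hB0.le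
        _ = ε := by field_simp
    linarith

variable {E : Type*} [NormedAddCommGroup E] [InnerProductSpace ℝ E]

theorem my_subgrad_norm_le (f : E → ℝ) (Cf ρ : ℝ) (hCf : 0 < Cf) (hρ : 0 ≤ ρ)
    (hlip : ∀ x y, |f x - f y| ≤ Cf * ‖x - y‖) (t y : E)
    (hsub : ∀ z, f z ≥ f t + ⟪y, z - t⟫ - ρ / 2 * ‖z - t‖ ^ 2) : ‖y‖ ≤ Cf := by
  rcases eq_or_ne y 0 with rfl | hy
  · simpa using hCf.le
  have hyn : 0 < ‖y‖ := norm_pos_iff.2 hy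
  refine le_of_forall_pos_le_add fun ε hε => ?_
  set s := min 1 (2 * ε / (ρ * ‖y‖ + 1)) with hsdef
  have hs0 : 0 < s := lt_min one_pos (by positivity)
  have hkey := hsub (t + s • y)
  have h1 : (t + s • y) - t = s • y := by abel
  rw [h1] at hkey
  have h2 : ⟪y, s • y⟫ = s * ‖y‖ ^ 2 := by
    rw [real_inner_smul_right, real_inner_self_eq_norm_sq]
  have h3 : ‖s • y‖ ^ 2 = s ^ 2 * ‖y‖ ^ 2 := by
    rw [norm_smul, Real.norm_eq_abs, abs_of_pos hs0, mul_pow]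
  rw [h2, h3] at hkey
  have h4 : f (t + s • y) - f t ≤ Cf * (s * ‖y‖) := by
    have := (abs_le.1 (hlip (t + s • y) t)).2
    rwa [h1, norm_smul, Real.norm_eq_abs, abs_of_pos hs0] at this
  -- from hkey : f (t+s•y) ≥ f t + s‖y‖² - ρ/2 s²‖y‖²
  have h5 : s * ‖y‖ ^ 2 ≤ Cf * (s * ‖y‖) + ρ / 2 * (s ^ 2 * ‖y‖ ^ 2) := by linarith
  -- divide by s‖y‖
  have h6 : ‖y‖ ≤ Cf + ρ / 2 * (s * ‖y‖) := by
    have hpos : 0 < s * ‖y‖ := by positivity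
    rw [← mul_le_mul_iff_of_pos_right hpos]
    calc ‖y‖ * (s * ‖y‖) = s * ‖y‖ ^ 2 := by ring
      _ ≤ Cf * (s * ‖y‖) + ρ / 2 * (s ^ 2 * ‖y‖ ^ 2) := h5
      _ = (Cf + ρ / 2 * (s * ‖y‖)) * (s * ‖y‖) := by ring
  have h7 : ρ / 2 * (s * ‖y‖) ≤ ε := by
    have hsle : s ≤ 2 * ε / (ρ * ‖y‖ + 1) := min_le_right _ _
    have : s * (ρ * ‖y‖ + 1) ≤ 2 * ε := by
      calc s * (ρ * ‖y‖ + 1) ≤ (2 * ε / (ρ * ‖y‖ + 1)) * (ρ * ‖y‖ + 1) :=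
            mul_le_mul_of_nonneg_right hsle (by positivity)
        _ = 2 * ε := div_mul_cancel₀ _ (by positivity)
    nlinarith [hs0, hyn, hρ]
  linarith


theorem my_env_eq (f : E → ℝ) (lam : ℝ) (x t : E)
    (hmin : ∀ v, f t + ‖x - t‖ ^ 2 / (2 * lam) ≤ f v + ‖x - v‖ ^ 2 / (2 * lam)) :
    (⨅ v, f v + ‖x - v‖ ^ 2 / (2 * lam)) = f t + ‖x - t‖ ^ 2 / (2 * lam) := by
  refine le_antisymm (ciInf_le ⟨f t + ‖x - t‖ ^ 2 / (2 * lam), ?_⟩ t) (le_ciInf hmin)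
  rintro b ⟨v, rfl⟩
  exact hmin v

set_option maxHeartbeats 1000000 in
theorem my_env_hasGradientAt [FiniteDimensional ℝ E] (f : E → ℝ) (hc : Continuous f)
    (Cf ρ lam : ℝ) (hCf : 0 < Cf) (hρ : 0 < ρ) (hlam : 0 < lam) (hlρ : lam * ρ < 1)
    (hlip : ∀ x y, |f x - f y| ≤ Cf * ‖x - y‖)
    (hwc : ConvexOn ℝ Set.univ fun x => f x + ρ / 2 * ‖x‖ ^ 2)
    (u t : E) (hmin : ∀ v, f t + ‖u - t‖ ^ 2 / (2 * lam) ≤ f v + ‖u - v‖ ^ 2 / (2 * lam)) :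
    HasGradientAt (fun x => ⨅ v, f v + ‖x - v‖ ^ 2 / (2 * lam)) (lam⁻¹ • (u - t)) u := by
  have hc1 : (0:ℝ) < 1 - lam * ρ := by linarith
  set K := 1 / (lam * (1 - lam * ρ)) with hKdef
  have hK0 : 0 < K := by rw [hKdef]; positivity
  set Ef : E → ℝ := fun x => ⨅ v, f v + ‖x - v‖ ^ 2 / (2 * lam) with hEf
  set y := lam⁻¹ • (u - t) with hy
  have hEu : Ef u = f t + ‖u - t‖ ^ 2 / (2 * lam) := my_env_eq f lam u t hmin
  have hquad : ∀ u', |Ef u' - Ef u - ⟪y, u' - u⟫| ≤ K * ‖u' - u‖ ^ 2 := by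
    intro u'
    obtain ⟨t', hmin'⟩ := my_prox_exists f hc Cf lam hCf hlam hlip u'
    have hEu' : Ef u' = f t' + ‖u' - t'‖ ^ 2 / (2 * lam) := my_env_eq f lam u' t' hmin'
    have hsub := my_prox_subgrad f ρ lam hρ hlam hlρ.le hwc u t hmin t'
    have hyδ : ⟪y, u' - u⟫ = lam⁻¹ * ⟪u - t, u' - u⟫ := real_inner_smul_left _ _ _
    have hyη : ⟪y, t' - t⟫ = lam⁻¹ * ⟪u - t, t' - t⟫ := real_inner_smul_left _ _ _
    rw [hyη] at hsub
    set D := ‖u' - u‖ with hD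
    set H := ‖t' - t‖ with hH
    set S := ‖(u' - u) - (t' - t)‖ with hS
    have hD0 : 0 ≤ D := norm_nonneg _
    have hH0 : 0 ≤ H := norm_nonneg _
    have hS0 : 0 ≤ S := norm_nonneg _
    have hHD : H - D ≤ S := by
      rw [hH, hD, hS]
      have h := norm_sub_norm_le (t' - t) (u' - u)
      have h2 : ‖(t' - t) - (u' - u)‖ = ‖(u' - u) - (t' - t)‖ := norm_sub_rev _ _
      linarith
    -- upper bound
    have hup : Ef u' - Ef u - lam⁻¹ * ⟪u - t, u' - u⟫ ≤ D ^ 2 / (2 * lam) := by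
      rw [hEu, hEu']
      have h1 := hmin' t
      have h2 : ‖u' - t‖ ^ 2 = ‖u - t‖ ^ 2 + 2 * ⟪u - t, u' - u⟫ + D ^ 2 := by
        rw [show u' - t = (u - t) + (u' - u) by abel, norm_add_sq_real, hD]
      rw [h2] at h1
      have h3 : (‖u - t‖ ^ 2 + 2 * ⟪u - t, u' - u⟫ + D ^ 2) / (2 * lam)
          - ‖u - t‖ ^ 2 / (2 * lam) - lam⁻¹ * ⟪u - t, u' - u⟫ = D ^ 2 / (2 * lam) := by
        field_simp
        ring
      linarith
    -- lower bound
    have hlow : -(K * D ^ 2) ≤ Ef u' - Ef u - lam⁻¹ * ⟪u - t, u' - u⟫ := by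
      rw [hEu, hEu']
      have h2 : ‖u' - t'‖ ^ 2 = ‖u - t‖ ^ 2
          + 2 * (⟪u - t, u' - u⟫ - ⟪u - t, t' - t⟫) + S ^ 2 := by
        rw [show u' - t' = (u - t) + ((u' - u) - (t' - t)) by abel, norm_add_sq_real, hS,
          inner_sub_right]
      have hS2 : H ^ 2 - 2 * H * D ≤ S ^ 2 := by
        rcases le_or_gt H (2 * D) with h | h
        · nlinarith
        · nlinarith [sq_nonneg (S - H + D)]
      have e : K * D ^ 2 - ρ / 2 * H ^ 2 + (H ^ 2 - 2 * H * D) / (2 * lam)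
          = (D ^ 2 + ((1 - lam * ρ) * H - D) ^ 2) / (2 * lam * (1 - lam * ρ)) := by
        rw [hKdef]
        field_simp
        ring
      have hpos : 0 ≤ (D ^ 2 + ((1 - lam * ρ) * H - D) ^ 2) / (2 * lam * (1 - lam * ρ)) := by
        positivity
      have hdivS : (H ^ 2 - 2 * H * D) / (2 * lam) ≤ S ^ 2 / (2 * lam) := by
        apply div_le_div_of_nonneg_right hS2
        positivity
      have h3 : (‖u - t‖ ^ 2 + 2 * (⟪u - t, u' - u⟫ - ⟪u - t, t' - t⟫) + S ^ 2) / (2 * lam)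
          - ‖u - t‖ ^ 2 / (2 * lam) - lam⁻¹ * ⟪u - t, u' - u⟫ + lam⁻¹ * ⟪u - t, t' - t⟫
          = S ^ 2 / (2 * lam) := by
        field_simp
        ring
      rw [h2]
      linarith [hsub, hpos, e, hdivS, h3]
    have hD2 : D ^ 2 / (2 * lam) ≤ K * D ^ 2 := by
      rw [hKdef, div_le_iff₀ (by positivity : (0:ℝ) < 2 * lam)]
      have he : 1 / (lam * (1 - lam * ρ)) * D ^ 2 * (2 * lam) = D ^ 2 * (2 / (1 - lam * ρ)) := by
        field_simp
      rw [he]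
      have h1 : (1:ℝ) ≤ 2 / (1 - lam * ρ) := by
        rw [le_div_iff₀ hc1]
        nlinarith [mul_pos hlam hρ]
      nlinarith [sq_nonneg D]
    have habs : |Ef u' - Ef u - ⟪y, u' - u⟫| ≤ K * D ^ 2 := by
      rw [hyδ, abs_le]
      exact ⟨by linarith [hlow], by linarith [hup, hD2]⟩
    exact habs
  -- conclude HasGradientAt
  rw [hasGradientAt_iff_isLittleO]
  rw [Asymptotics.isLittleO_iff]
  intro c hcpos
  rw [Metric.eventually_nhds_iff]
  refine ⟨c / (K + 1), by positivity, fun x' hx' => ?_⟩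
  rw [dist_eq_norm] at hx'
  have h1 := hquad x'
  have h2 : K * ‖x' - u‖ ^ 2 ≤ c * ‖x' - u‖ := by
    have h3 : K * ‖x' - u‖ ≤ K * (c / (K + 1)) := by
      apply mul_le_mul_of_nonneg_left hx'.le hK0.le
    have h4 : K * (c / (K + 1)) ≤ c := by
      rw [← mul_div_assoc, div_le_iff₀ (by positivity : (0:ℝ) < K + 1)]
      nlinarith [hcpos.le, hK0.le]
    nlinarith [norm_nonneg (x' - u), h3, h4]
  calc ‖(fun x' => Ef x' - Ef u - ⟪y, x' - u⟫) x'‖ = |Ef x' - Ef u - ⟪y, x' - u⟫| := rfl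
    _ ≤ K * ‖x' - u‖ ^ 2 := h1
    _ ≤ c * ‖x' - u‖ := h2
    _ = c * ‖(fun x' => x' - u) x'‖ := rfl
end Aux

set_option maxHeartbeats 1000000 in
/-- Under the outer-smoothing setup with `λ = ε/Cf < 1/ρf`, if
`‖∇F_λ(w)‖ ≤ ε` then `w` is an approximate `ε`-stationary solution of the original problem:
there are points `t i` and subgradients `y i` of `f i` at `t i` with `‖t i − g i w‖ ≤ ε`
and `‖(1/n) ∑ i, (Dg_i(w))^* y i‖ ≤ ε`. -/
theorem stmt4 (d d₁ n : ℕ) (hn : 1 ≤ n)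
    (f : Fin n → EuclideanSpace ℝ (Fin d₁) → ℝ)
    (g : Fin n → EuclideanSpace ℝ (Fin d) → EuclideanSpace ℝ (Fin d₁))
    (Cf ρf Cg Lg ε lam : ℝ)
    (hρf : 0 < ρf) (hCf : 0 < Cf) (hε : 0 < ε)
    (hlam : lam = ε / Cf) (hlam' : lam < 1 / ρf)
    (hf_cont : ∀ i, Continuous (f i))
    (hf_lip : ∀ i (x y : EuclideanSpace ℝ (Fin d₁)), |f i x - f i y| ≤ Cf * ‖x - y‖)
    (hf_wc : ∀ i, ConvexOn ℝ Set.univ (fun x => f i x + ρf / 2 * ‖x‖ ^ 2))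
    (hg_lip : ∀ i (x y : EuclideanSpace ℝ (Fin d)), ‖g i x - g i y‖ ≤ Cg * ‖x - y‖)
    (hg_diff : ∀ i, Differentiable ℝ (g i))
    (hg_smooth : ∀ i (x y : EuclideanSpace ℝ (Fin d)),
      ‖fderiv ℝ (g i) x - fderiv ℝ (g i) y‖ ≤ Lg * ‖x - y‖)
    -- the outer-smoothed objective
    (Flam : EuclideanSpace ℝ (Fin d) → ℝ)
    (hFlam : ∀ w, Flam w = (n : ℝ)⁻¹ * ∑ i, ⨅ v, f i v + ‖g i w - v‖ ^ 2 / (2 * lam))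
    (w : EuclideanSpace ℝ (Fin d))
    (hw : ‖gradient Flam w‖ ≤ ε) :
    ∃ (t y : Fin n → EuclideanSpace ℝ (Fin d₁)),
      (∀ i z, f i z ≥ f i (t i) + ⟪y i, z - t i⟫ - ρf / 2 * ‖z - t i‖ ^ 2) ∧
      (∀ i, ‖t i - g i w‖ ≤ ε) ∧
      ‖(n : ℝ)⁻¹ • ∑ i, ContinuousLinearMap.adjoint (fderiv ℝ (g i) w) (y i)‖ ≤ ε := by
  have hlam0 : 0 < lam := by rw [hlam]; positivity
  have hlρ : lam * ρf < 1 := by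
    have := (lt_div_iff₀ hρf).1 hlam'
    linarith
  choose t htmin using fun i =>
    my_prox_exists (f i) (hf_cont i) Cf lam hCf hlam0 (hf_lip i) (g i w)
  set y : Fin n → EuclideanSpace ℝ (Fin d₁) := fun i => lam⁻¹ • (g i w - t i) with hy
  have hsub : ∀ i z, f i z ≥ f i (t i) + ⟪y i, z - t i⟫ - ρf / 2 * ‖z - t i‖ ^ 2 :=
    fun i => my_prox_subgrad (f i) ρf lam hρf hlam0 hlρ.le (hf_wc i) (g i w) (t i) (htmin i)
  have hynorm : ∀ i, ‖y i‖ ≤ Cf := fun i =>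
    my_subgrad_norm_le (f i) Cf ρf hCf hρf.le (hf_lip i) (t i) (y i) (hsub i)
  have htg : ∀ i, ‖t i - g i w‖ ≤ ε := by
    intro i
    have h1 : ‖g i w - t i‖ = lam * ‖y i‖ := by
      rw [hy]
      simp only [norm_smul, Real.norm_eq_abs, abs_of_pos (inv_pos.2 hlam0)]
      field_simp
    calc ‖t i - g i w‖ = ‖g i w - t i‖ := norm_sub_rev _ _
      _ = lam * ‖y i‖ := h1
      _ ≤ lam * Cf := mul_le_mul_of_nonneg_left (hynorm i) hlam0.le
      _ = ε := by rw [hlam]; field_simp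
  -- gradient computation
  have hgradi : ∀ i, HasGradientAt (fun x => ⨅ v, f i v + ‖x - v‖ ^ 2 / (2 * lam)) (y i)
      (g i w) := fun i =>
    my_env_hasGradientAt (f i) (hf_cont i) Cf ρf lam hCf hρf hlam0 hlρ (hf_lip i) (hf_wc i)
      (g i w) (t i) (htmin i)
  have hfd : ∀ i, HasFDerivAt (fun x => ⨅ v, f i v + ‖g i x - v‖ ^ 2 / (2 * lam))
      ((InnerProductSpace.toDual ℝ _ (y i)).comp (fderiv ℝ (g i) w)) w := fun i =>
    ((hgradi i).hasFDerivAt).comp w ((hg_diff i) w).hasFDerivAt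
  have hsum : HasFDerivAt (fun x => ∑ i, ⨅ v, f i v + ‖g i x - v‖ ^ 2 / (2 * lam))
      (∑ i, (InnerProductSpace.toDual ℝ _ (y i)).comp (fderiv ℝ (g i) w)) w :=
    HasFDerivAt.fun_sum fun i _ => hfd i
  have hFl : HasFDerivAt Flam
      ((n : ℝ)⁻¹ • ∑ i, (InnerProductSpace.toDual ℝ _ (y i)).comp (fderiv ℝ (g i) w)) w := by
    have hFe : Flam = fun x => (n : ℝ)⁻¹ * ∑ i, ⨅ v, f i v + ‖g i x - v‖ ^ 2 / (2 * lam) :=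
      funext hFlam
    rw [hFe]
    exact hsum.const_mul _
  set G := (n : ℝ)⁻¹ • ∑ i, ContinuousLinearMap.adjoint (fderiv ℝ (g i) w) (y i) with hG
  have hdual : InnerProductSpace.toDual ℝ _ G
      = (n : ℝ)⁻¹ • ∑ i, (InnerProductSpace.toDual ℝ _ (y i)).comp (fderiv ℝ (g i) w) := by
    apply ContinuousLinearMap.ext
    intro x
    simp only [hG, InnerProductSpace.toDual_apply_apply, ContinuousLinearMap.smul_apply,
      ContinuousLinearMap.coe_sum', Finset.sum_apply, ContinuousLinearMap.comp_apply,
      real_inner_smul_left, sum_inner, ContinuousLinearMap.adjoint_inner_left, smul_eq_mul]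
  have hgradF : HasGradientAt Flam G w := by
    rw [hasGradientAt_iff_hasFDerivAt, hdual]
    exact hFl
  refine ⟨t, y, hsub, htg, ?_⟩
  rw [← hG, ← hgradF.gradient]
  exact hw
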